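/- Let d ≥ 1 and N ≥ 2d be natural numbers, and let H i j, for ordered pairs i ≠ j in {1,2,3}, be channel matrices for the 3-user N×N MIMO interference channel. For each pair i ≠ j let Ĥ i j denote the top-left 2d × 2d corner submatrix of H i j. Assume every Ĥ i j is invertible and that the matrix B = Ĥ 1 2 · (Ĥ 3 2)⁻¹ · Ĥ 3 1 · (Ĥ 2 1)⁻¹ · Ĥ 2 3 · (Ĥ 1 3)⁻¹ is diagonalizable over ℂ (i.e., ℂ^{2d} has a basis of eigenvectors of B). Then a feasible alignment strategy with dimensions (d, d, d) exists. -/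

import Mathlib

open Matrix

/-- A feasible vector-space interference-alignment strategy with dimensions
`d i` for the 3-user channel with matrices `H i j` (channel from transmitter
`j` to receiver `i`). -/
def Feasible {N M : ℕ} (H : Fin 3 → Fin 3 → Matrix (Fin N) (Fin M) ℂ)
    (d : Fin 3 → ℕ) : Prop :=
  ∃ (U : Fin 3 → Submodule ℂ (Fin M → ℂ)) (V : Fin 3 → Submodule ℂ (Fin N → ℂ)),
    (∀ i, Module.finrank ℂ (U i) = d i) ∧
    (∀ i, Module.finrank ℂ (V i) = d i) ∧
    (∀ i j, i ≠ j → ∀ u ∈ U j, ∀ v ∈ V i, star v ⬝ᵥ (H i j).mulVec u = 0)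

namespace ThreeUserAux

open Module Submodule

/-- zero-padding linear map `ℂ^n → ℂ^N`. -/
noncomputable def padLM (n N : ℕ) (h : n ≤ N) : (Fin n → ℂ) →ₗ[ℂ] (Fin N → ℂ) where
  toFun x r := if hr : (r : ℕ) < n then x ⟨r, hr⟩ else 0
  map_add' x y := by funext r; by_cases hr : (r : ℕ) < n <;> simp [hr]
  map_smul' c x := by funext r; by_cases hr : (r : ℕ) < n <;> simp [hr]

lemma padLM_castLE {n N : ℕ} (h : n ≤ N) (x : Fin n → ℂ) (r : Fin n) :
    padLM n N h x (Fin.castLE h r) = x r := by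
  simp [padLM]

lemma padLM_injective {n N : ℕ} (h : n ≤ N) : Function.Injective (padLM n N h) := by
  intro x y hxy
  funext r
  have := congrFun hxy (Fin.castLE h r)
  simpa [padLM_castLE] using this

lemma padLM_zero {n N : ℕ} (h : n ≤ N) (x : Fin n → ℂ) (c : Fin N)
    (hc : ¬ (c : ℕ) < n) : padLM n N h x c = 0 := by
  simp [padLM, hc]

lemma mulVec_pad {n N : ℕ} (h : n ≤ N) (A : Matrix (Fin N) (Fin N) ℂ)
    (x : Fin n → ℂ) (r : Fin n) :
    A.mulVec (padLM n N h x) (Fin.castLE h r)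
      = (A.submatrix (Fin.castLE h) (Fin.castLE h)).mulVec x r := by
  classical
  simp only [Matrix.mulVec, dotProduct, Matrix.submatrix_apply]
  rw [show (Finset.univ : Finset (Fin N))
      = Finset.univ.map (Fin.castLEEmb h) ∪
        (Finset.univ \ Finset.univ.map (Fin.castLEEmb h)) by
    simp [Finset.union_sdiff_of_subset]]
  rw [Finset.sum_union (Finset.disjoint_sdiff)]
  have h2 : ∀ c ∈ (Finset.univ \ Finset.univ.map (Fin.castLEEmb h)),
      A (Fin.castLE h r) c * padLM n N h x c = 0 := by
    intro c hc
    simp only [Finset.mem_sdiff, Finset.mem_map, Finset.mem_univ, true_and] at hc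
    have : ¬ (c : ℕ) < n := by
      intro hlt
      exact hc ⟨⟨(c : ℕ), hlt⟩, by simp [Fin.castLEEmb, Fin.ext_iff]⟩
    rw [padLM_zero h x c this, mul_zero]
  rw [Finset.sum_eq_zero h2, add_zero, Finset.sum_map]
  refine Finset.sum_congr rfl fun c _ => ?_
  have : ((Fin.castLEEmb h) c) = Fin.castLE h c := rfl
  rw [this, padLM_castLE]

lemma finrank_comap_le {V W : Type*} [AddCommGroup V] [Module ℂ V]
    [AddCommGroup W] [Module ℂ W] [FiniteDimensional ℂ V] [FiniteDimensional ℂ W]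
    (f : V →ₗ[ℂ] W) (S : Submodule ℂ W) :
    finrank ℂ (S.comap f) ≤ finrank ℂ S + finrank ℂ (LinearMap.ker f) := by
  set g := f.domRestrict (S.comap f) with hg
  have h1 := LinearMap.finrank_range_add_finrank_ker g
  have hr : LinearMap.range g ≤ S := by
    rintro _ ⟨x, rfl⟩
    exact x.2
  have hk : (LinearMap.ker g).map (S.comap f).subtype ≤ LinearMap.ker f := by
    rintro _ ⟨x, hx, rfl⟩
    simpa [hg, LinearMap.mem_ker] using hx
  have h2 : finrank ℂ (LinearMap.ker g) ≤ finrank ℂ (LinearMap.ker f) := by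
    rw [← Submodule.finrank_map_subtype_eq]
    exact Submodule.finrank_mono hk
  have h3 : finrank ℂ (LinearMap.range g) ≤ finrank ℂ S := Submodule.finrank_mono hr
  omega

end ThreeUserAux

open ThreeUserAux Module

/-- Proposition 9, achievability for `K = 3`, `M = N ≥ 2d`.
If the top-left `2d × 2d` corners `Ĥ i j` of the channel matrices are invertible
and the product `B = Ĥ12 Ĥ32⁻¹ Ĥ31 Ĥ21⁻¹ Ĥ23 Ĥ13⁻¹` (users labelled `0,1,2`)
is diagonalizable over `ℂ`, then a feasible strategy with dimensions `(d,d,d)`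
exists. -/
theorem three_user_square_achievable
    (d N : ℕ) (hd : 1 ≤ d) (hN : 2 * d ≤ N)
    (H : Fin 3 → Fin 3 → Matrix (Fin N) (Fin N) ℂ)
    (Hhat : Fin 3 → Fin 3 → Matrix (Fin (2 * d)) (Fin (2 * d)) ℂ)
    (hHhat : ∀ i j : Fin 3,
      Hhat i j = (H i j).submatrix (Fin.castLE hN) (Fin.castLE hN))
    (hinv : ∀ i j : Fin 3, i ≠ j → IsUnit (Hhat i j))
    (B : Matrix (Fin (2 * d)) (Fin (2 * d)) ℂ)
    (hB : B = Hhat 0 1 * (Hhat 2 1)⁻¹ * Hhat 2 0 * (Hhat 1 0)⁻¹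
        * Hhat 1 2 * (Hhat 0 2)⁻¹)
    (hdiag : ∃ b : Basis (Fin (2 * d)) ℂ (Fin (2 * d) → ℂ),
      ∀ k, ∃ μ : ℂ, B.mulVec (b k) = μ • b k) :
    Feasible H (fun _ => d) := by
  classical
  obtain ⟨b, hb⟩ := hdiag
  choose μ hμ using hb
  have hdn : d ≤ 2 * d := by omega
  -- invertibility facts
  have hu : ∀ i j : Fin 3, i ≠ j → IsUnit (Hhat i j).det :=
    fun i j hij => (Matrix.isUnit_iff_isUnit_det _).mp (hinv i j hij)
  have hmul : ∀ (i j : Fin 3), i ≠ j → Hhat i j * (Hhat i j)⁻¹ = 1 :=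
    fun i j hij => Matrix.mul_nonsing_inv _ (hu i j hij)
  -- the transmit-side transfer matrices
  set T : Matrix (Fin (2 * d)) (Fin (2 * d)) ℂ :=
    (Hhat 1 0)⁻¹ * (Hhat 1 2 * (Hhat 0 2)⁻¹) with hT
  set M : Fin 3 → Matrix (Fin (2 * d)) (Fin (2 * d)) ℂ :=
    ![T, (Hhat 2 1)⁻¹ * (Hhat 2 0 * T), (Hhat 0 2)⁻¹] with hM
  have hMunit : ∀ j, IsUnit (M j) := by
    have hTu : IsUnit T :=
      (Matrix.isUnit_nonsing_inv_iff.mpr (hinv 1 0 (by decide))).mul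
        ((hinv 1 2 (by decide)).mul (Matrix.isUnit_nonsing_inv_iff.mpr (hinv 0 2 (by decide))))
    have h0 : IsUnit (M 0) := hTu
    have h1 : IsUnit (M 1) :=
      (Matrix.isUnit_nonsing_inv_iff.mpr (hinv 2 1 (by decide))).mul
        ((hinv 2 0 (by decide)).mul hTu)
    have h2 : IsUnit (M 2) := Matrix.isUnit_nonsing_inv_iff.mpr (hinv 0 2 (by decide))
    intro j
    fin_cases j
    · exact h0
    · exact h1
    · exact h2
  -- corner receive alignment subspaces
  set s : Fin 3 → Fin d → (Fin (2 * d) → ℂ) :=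
    ![fun k => b (Fin.castLE hdn k),
      fun k => (Hhat 1 0 * T).mulVec (b (Fin.castLE hdn k)),
      fun k => (Hhat 2 0 * T).mulVec (b (Fin.castLE hdn k))] with hs
  set Sspan : Fin 3 → Submodule ℂ (Fin (2 * d) → ℂ) :=
    fun i => Submodule.span ℂ (Set.range (s i)) with hSspan
  -- the key alignment containments
  have hM1 : M 1 = (Hhat 2 1)⁻¹ * (Hhat 2 0 * T) := rfl
  have hM0 : M 0 = T := rfl
  have hM2 : M 2 = (Hhat 0 2)⁻¹ := rfl
  have hs0 : ∀ k, s 0 k = b (Fin.castLE hdn k) := fun _ => rfl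
  have hs1 : ∀ k, s 1 k = (Hhat 1 0 * T).mulVec (b (Fin.castLE hdn k)) := fun _ => rfl
  have hs2 : ∀ k, s 2 k = (Hhat 2 0 * T).mulVec (b (Fin.castLE hdn k)) := fun _ => rfl
  have align01 : ∀ k : Fin d,
      (Hhat 0 1 * M 1).mulVec (b (Fin.castLE hdn k)) ∈ Sspan 0 := by
    intro k
    have hBe : Hhat 0 1 * M 1 = B := by
      rw [hM1, hB, hT]; simp only [Matrix.mul_assoc]
    rw [hBe, hμ]
    exact Submodule.smul_mem _ _ (Submodule.subset_span ⟨k, (hs0 k).symm⟩)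
  have align02 : ∀ k : Fin d,
      (Hhat 0 2 * M 2).mulVec (b (Fin.castLE hdn k)) ∈ Sspan 0 := by
    intro k
    rw [hM2, hmul 0 2 (by decide), Matrix.one_mulVec]
    exact Submodule.subset_span ⟨k, (hs0 k).symm⟩
  have align10 : ∀ k : Fin d,
      (Hhat 1 0 * M 0).mulVec (b (Fin.castLE hdn k)) ∈ Sspan 1 := by
    intro k
    rw [hM0]
    exact Submodule.subset_span ⟨k, (hs1 k).symm⟩
  have align12 : ∀ k : Fin d,
      (Hhat 1 2 * M 2).mulVec (b (Fin.castLE hdn k)) ∈ Sspan 1 := by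
    intro k
    have : Hhat 1 2 * M 2 = Hhat 1 0 * T := by
      rw [hM2, hT, ← Matrix.mul_assoc, hmul 1 0 (by decide), Matrix.one_mul]
    rw [this]
    exact Submodule.subset_span ⟨k, (hs1 k).symm⟩
  have align20 : ∀ k : Fin d,
      (Hhat 2 0 * M 0).mulVec (b (Fin.castLE hdn k)) ∈ Sspan 2 := by
    intro k
    rw [hM0]
    exact Submodule.subset_span ⟨k, (hs2 k).symm⟩
  have align21 : ∀ k : Fin d,
      (Hhat 2 1 * M 1).mulVec (b (Fin.castLE hdn k)) ∈ Sspan 2 := by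
    intro k
    have : Hhat 2 1 * M 1 = Hhat 2 0 * T := by
      rw [hM1, ← Matrix.mul_assoc, hmul 2 1 (by decide), Matrix.one_mul]
    rw [this]
    exact Submodule.subset_span ⟨k, (hs2 k).symm⟩
  have align : ∀ (i j : Fin 3), i ≠ j → ∀ k : Fin d,
      (Hhat i j).mulVec ((M j).mulVec (b (Fin.castLE hdn k))) ∈ Sspan i := by
    intro i j hij k
    rw [Matrix.mulVec_mulVec]
    fin_cases i <;> fin_cases j
    · exact absurd rfl hij
    · exact align01 k
    · exact align02 k
    · exact align10 k
    · exact absurd rfl hij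
    · exact align12 k
    · exact align20 k
    · exact align21 k
    · exact absurd rfl hij
  -- transmit subspaces
  set pad := padLM (2 * d) N hN with hpad
  set u : Fin 3 → Fin d → (Fin N → ℂ) :=
    fun j k => pad ((M j).mulVec (b (Fin.castLE hdn k))) with husrc
  set U : Fin 3 → Submodule ℂ (Fin N → ℂ) :=
    fun j => Submodule.span ℂ (Set.range (u j)) with hU
  have hUrank : ∀ j, finrank ℂ (U j) = d := by
    intro j
    have li0 : LinearIndependent ℂ (fun k : Fin d => b (Fin.castLE hdn k)) :=
      b.linearIndependent.comp _ (Fin.castLE_injective hdn)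
    have inj : Function.Injective (pad ∘ₗ (M j).mulVecLin) := by
      refine (padLM_injective hN).comp ?_
      have : Function.Injective ((M j).mulVec) :=
        Matrix.mulVec_injective_iff_isUnit.mpr (hMunit j)
      exact this
    have li : LinearIndependent ℂ (u j) :=
      li0.map' (pad ∘ₗ (M j).mulVecLin) (LinearMap.ker_eq_bot.mpr inj)
    rw [hU, finrank_span_eq_card li, Fintype.card_fin]
  -- restriction to the corner and interference spaces
  set ρ : (Fin N → ℂ) →ₗ[ℂ] (Fin (2 * d) → ℂ) :=
    LinearMap.funLeft ℂ ℂ (Fin.castLE hN) with hρ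
  have hρsurj : Function.Surjective ρ :=
    LinearMap.funLeft_surjective_of_injective ℂ ℂ _ (Fin.castLE_injective hN)
  set W : Fin 3 → Submodule ℂ (Fin N → ℂ) := fun i => (Sspan i).comap ρ with hW
  have hWrank : ∀ i, finrank ℂ (W i) + d ≤ N := by
    intro i
    have h1 : finrank ℂ (W i) ≤ finrank ℂ (Sspan i) + finrank ℂ (LinearMap.ker ρ) :=
      finrank_comap_le ρ (Sspan i)
    have h2 : finrank ℂ (Sspan i) ≤ d := by
      calc finrank ℂ (Sspan i) ≤ (Set.range (s i)).toFinset.card :=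
            finrank_span_le_card _
        _ ≤ d := by
            rw [Set.toFinset_range]
            exact (Finset.card_image_le).trans (by simp)
    have h3 : finrank ℂ (LinearMap.range ρ) + finrank ℂ (LinearMap.ker ρ) = N := by
      have := LinearMap.finrank_range_add_finrank_ker ρ
      simpa using this
    have h4 : finrank ℂ (LinearMap.range ρ) = 2 * d := by
      rw [LinearMap.range_eq_top.mpr hρsurj]
      simp
    omega
  -- Euclidean structure and receive subspaces
  set eqv : EuclideanSpace ℂ (Fin N) ≃ₗ[ℂ] (Fin N → ℂ) :=
    WithLp.linearEquiv 2 ℂ (Fin N → ℂ) with heqv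
  set W' : Fin 3 → Submodule ℂ (EuclideanSpace ℂ (Fin N)) :=
    fun i => (W i).map eqv.symm.toLinearMap with hW'
  have hW'rank : ∀ i, finrank ℂ (W' i) = finrank ℂ (W i) := by
    intro i
    exact LinearEquiv.finrank_map_eq eqv.symm (W i)
  have hOrank : ∀ i, d ≤ finrank ℂ ((W' i)ᗮ) := by
    intro i
    have h1 := (W' i).finrank_add_finrank_orthogonal
    rw [finrank_euclideanSpace_fin] at h1
    have h2 := hWrank i
    have h3 := hW'rank i
    omega
  have hbO : ∀ i : Fin 3, ∃ Vi : Submodule ℂ (EuclideanSpace ℂ (Fin N)),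
      Vi ≤ (W' i)ᗮ ∧ finrank ℂ Vi = d := by
    intro i
    set bas := finBasis ℂ ((W' i)ᗮ) with hbas
    set g : Fin d → EuclideanSpace ℂ (Fin N) :=
      fun k => (bas (Fin.castLE (hOrank i) k) : EuclideanSpace ℂ (Fin N)) with hg
    refine ⟨Submodule.span ℂ (Set.range g), ?_, ?_⟩
    · rw [Submodule.span_le]
      rintro _ ⟨k, rfl⟩
      exact (bas (Fin.castLE (hOrank i) k)).2
    · have li : LinearIndependent ℂ g := by
        have := (bas.linearIndependent.comp _
          (Fin.castLE_injective (hOrank i))).map' ((W' i)ᗮ).subtype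
          (Submodule.ker_subtype _)
        exact this
      rw [finrank_span_eq_card li, Fintype.card_fin]
  choose V' hV'le hV'rank using hbO
  set V : Fin 3 → Submodule ℂ (Fin N → ℂ) :=
    fun i => (V' i).map eqv.toLinearMap with hV
  refine ⟨U, V, fun i => hUrank i, fun i => ?_, ?_⟩
  · rw [hV]
    rw [show finrank ℂ ((V' i).map eqv.toLinearMap) = finrank ℂ (V' i) from
      LinearEquiv.finrank_map_eq eqv (V' i)]
    exact hV'rank i
  · intro i j hij uvec huvec v hv
    rw [hV] at hv
    obtain ⟨v'', hv'', rfl⟩ := Submodule.mem_map.mp hv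
    -- the linear functional u ↦ ⟨v, H u⟩
    set ℓ : (Fin N → ℂ) →ₗ[ℂ] ℂ :=
      { toFun := fun w => star (eqv.toLinearMap v'') ⬝ᵥ (H i j).mulVec w
        map_add' := by
          intro x y
          simp [Matrix.mulVec_add, dotProduct_add]
        map_smul' := by
          intro c x
          simp [Matrix.mulVec_smul, dotProduct_smul] } with hℓ
    have hker : U j ≤ LinearMap.ker ℓ := by
      rw [hU, Submodule.span_le]
      rintro _ ⟨k, rfl⟩
      have hWmem : (H i j).mulVec (u j k) ∈ W i := by
        rw [hW]
        refine Submodule.mem_comap.mpr ?_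
        have heq : ρ ((H i j).mulVec (u j k))
            = (Hhat i j).mulVec ((M j).mulVec (b (Fin.castLE hdn k))) := by
          funext r
          rw [hρ]
          rw [LinearMap.funLeft_apply]
          rw [husrc, hpad]
          rw [mulVec_pad hN (H i j)]
          rw [hHhat i j]
        rw [heq]
        exact align i j hij k
      have hOv : v'' ∈ (W' i)ᗮ := hV'le i hv''
      have hmemW' : (eqv.symm ((H i j).mulVec (u j k))) ∈ W' i :=
        Submodule.mem_map_of_mem hWmem
      have hz := (Submodule.mem_orthogonal' _ _).mp hOv _ hmemW'
      rw [SetLike.mem_coe, LinearMap.mem_ker]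
      rw [hℓ]
      rw [EuclideanSpace.inner_eq_star_dotProduct, dotProduct_comm] at hz
      exact hz
    exact hker huvec
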